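/- Let H be a complex inner product space and let x, y ∈ H be nonzero. Let w ∈ ℂ and u ∈ H satisfy ⟨x, u⟩ = 0 and ⟨y, u⟩ = 0, and set z = w • y + u; assume z ≠ 0. Then C(x, z) ≤ C(x, y). Moreover, if u ≠ 0 and ⟨x, y⟩ ≠ 0, then C(x, z) < C(x, y). -/

import Mathlib

open scoped InnerProductSpace

/-- The coherence of two vectors of a complex inner product space
(inner product conjugate-linear in the first argument):
`C(u, v) = ‖⟪u, v⟫‖² / (‖u‖² · ‖v‖²)`. -/
noncomputable def coherence {H : Type*} [NormedAddCommGroup H]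
    [InnerProductSpace ℂ H] (u v : H) : ℝ :=
  ‖⟪u, v⟫_ℂ‖ ^ 2 / (‖u‖ ^ 2 * ‖v‖ ^ 2)

/-- single-frequency core of the paper's Lemma 2: passing from
`y` to `z = w • y + u`, where `u` is orthogonal to both `x` and `y`, cannot
increase the coherence with `x`; the inequality is strict if `u ≠ 0` and
`⟪x, y⟫ ≠ 0`. -/
theorem coherence_le_of_gain_plus_orthogonal_noise
    {H : Type*} [NormedAddCommGroup H] [InnerProductSpace ℂ H]
    (x y : H) (hx : x ≠ 0) (hy : y ≠ 0)
    (w : ℂ) (u : H) (hxu : ⟪x, u⟫_ℂ = 0) (hyu : ⟪y, u⟫_ℂ = 0)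
    (z : H) (hz : z = w • y + u) (hz0 : z ≠ 0) :
    coherence x z ≤ coherence x y ∧
    (u ≠ 0 → ⟪x, y⟫_ℂ ≠ 0 → coherence x z < coherence x y) := by
  have hiz : ⟪x, z⟫_ℂ = w * ⟪x, y⟫_ℂ := by
    rw [hz, inner_add_right, inner_smul_right, hxu, add_zero]
  have horth : ⟪(w • y : H), u⟫_ℂ = 0 := by
    rw [inner_smul_left, hyu, mul_zero]
  have hnz : ‖z‖ ^ 2 = ‖w‖ ^ 2 * ‖y‖ ^ 2 + ‖u‖ ^ 2 := by
    rw [hz, norm_add_sq (𝕜 := ℂ), horth, norm_smul]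
    simp [mul_pow]
  have hxp : (0:ℝ) < ‖x‖ ^ 2 := pow_pos (norm_pos_iff.mpr hx) 2
  have hyp : (0:ℝ) < ‖y‖ ^ 2 := pow_pos (norm_pos_iff.mpr hy) 2
  have hzp : (0:ℝ) < ‖z‖ ^ 2 := pow_pos (norm_pos_iff.mpr hz0) 2
  have hup : (0:ℝ) ≤ ‖u‖ ^ 2 := by positivity
  have hniz : ‖⟪x, z⟫_ℂ‖ ^ 2 = ‖w‖ ^ 2 * ‖⟪x, y⟫_ℂ‖ ^ 2 := by
    rw [hiz, norm_mul, mul_pow]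
  constructor
  · unfold coherence
    rw [div_le_div_iff₀ (mul_pos hxp hzp) (mul_pos hxp hyp), hniz, hnz]
    nlinarith [mul_nonneg (mul_nonneg (sq_nonneg ‖⟪x, y⟫_ℂ‖) hxp.le) hup]
  · intro hu hxy
    have hup' : (0:ℝ) < ‖u‖ ^ 2 := pow_pos (norm_pos_iff.mpr hu) 2
    have hap : (0:ℝ) < ‖⟪x, y⟫_ℂ‖ ^ 2 := pow_pos (norm_pos_iff.mpr hxy) 2
    unfold coherence
    rw [div_lt_div_iff₀ (mul_pos hxp hzp) (mul_pos hxp hyp), hniz, hnz]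
    nlinarith [mul_pos (mul_pos hap hxp) hup']
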